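/- Let Σ be a type, w : ℕ → Option Σ, ζ : Σ, u : ℕ, and let w' := Function.update w u (some ζ). Suppose there are positions with x_o ≤ z₁, z₂ ≤ x_c, x_c < y_o, y_o ≤ z₃, z₄ ≤ y_c such that z₁ ⤳_{w'} u, u ⤳_{w'} z₂, z₃ ⤳_{w'} v, v ⤳_{w'} z₄, w' v = some ζ, w[x_o,z₁] = w[y_o,z₃], and w[z₂,x_c] = w[z₄,y_c]. Then w'[x_o,x_c] = w'[y_o,y_c]. (Case 3.2 of the proof of Lemma 3.4 of the paper, illustrated in Figure 1: the newly inserted symbol acts as a bridge between two pairs of equal subwords.) -/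

import Mathlib

/-- `y` carries the next symbol after `x` in the partial word `w`. -/
def Nxt {α : Type*} (w : ℕ → Option α) (x y : ℕ) : Prop :=
  w x ≠ none ∧ w y ≠ none ∧ x < y ∧ ∀ z, x < z → z < y → w z = none

/-- The subword of `w` between positions `i` and `j` (inclusive). -/
def subword {α : Type*} (w : ℕ → Option α) (i j : ℕ) : List α :=
  (List.range' i (j + 1 - i)).filterMap w

lemma subword_split {α : Type*} (w : ℕ → Option α) (i k j : ℕ)
    (h1 : i ≤ k + 1) (h2 : k ≤ j) :
    subword w i j = subword w i k ++ subword w (k + 1) j := by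
  unfold subword
  rw [← List.filterMap_append]
  congr 1
  have h3 : k + 1 - i + 1 * (j + 1 - (k + 1)) = 1 * (j + 1 - (k + 1)) + (k + 1 - i) := by omega
  have := (List.range'_append : List.range' i (k + 1 - i) 1 ++ List.range' (i + 1 * (k + 1 - i)) (j + 1 - (k + 1)) 1 = List.range' i ((k + 1 - i) + (j + 1 - (k + 1))) 1)
  rw [show i + 1 * (k + 1 - i) = k + 1 by omega] at this
  rw [this, show k + 1 - i + (j + 1 - (k + 1)) = j + 1 - i by omega]

lemma subword_update_not_mem {α : Type*} (w : ℕ → Option α) (a : Option α) (u i j : ℕ)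
    (h : u < i ∨ j < u) :
    subword (Function.update w u a) i j = subword w i j := by
  unfold subword
  apply List.filterMap_congr
  intro t ht
  rw [List.mem_range'_1] at ht
  exact Function.update_of_ne (by omega) _ _

lemma gap_single {α : Type*} (w : ℕ → Option α) (u : ℕ) (ζ : α) (hu : w u = some ζ) :
    ∀ n i, i ≤ u → u < i + n → (∀ t, i ≤ t → t < i + n → t ≠ u → w t = none) →
    (List.range' i n).filterMap w = [ζ] := by
  intro n
  induction n with
  | zero => intro i h1 h2 _; omega
  | succ n ih =>
    intro i h1 h2 h3
    rw [List.range'_succ, List.filterMap_cons]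
    rcases eq_or_ne i u with rfl | hne
    · rw [hu]
      have : (List.range' (i + 1) n).filterMap w = [] := by
        rw [List.filterMap_eq_nil_iff]
        intro t ht
        rw [List.mem_range'_1] at ht
        exact h3 t (by omega) (by omega) (by omega)
      rw [this]
    · rw [h3 i le_rfl (by omega) hne]
      exact ih (i + 1) (by omega) (by omega) (fun t ht1 ht2 => h3 t (by omega) (by omega))

lemma subword_bridge {α : Type*} (w : ℕ → Option α) (ζ : α) (a b u : ℕ)
    (hab : a < u) (hub : u < b) (hu : w u = some ζ)
    (hgap : ∀ z, a < z → z < b → z ≠ u → w z = none) :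
    subword w (a + 1) (b - 1) = [ζ] := by
  unfold subword
  exact gap_single w u ζ hu _ (a + 1) (by omega) (by omega)
    (fun t ht1 ht2 ht3 => hgap t (by omega) (by omega) ht3)

theorem insertion_bridge_case {α : Type*} (w : ℕ → Option α) (ζ : α)
    (u xo xc yo yc z₁ z₂ z₃ z₄ v : ℕ)
    (h₁ : xo ≤ z₁) (h₂ : z₂ ≤ xc) (h₃ : xc < yo) (h₄ : yo ≤ z₃) (h₅ : z₄ ≤ yc)
    (hn₁ : Nxt (Function.update w u (some ζ)) z₁ u)
    (hn₂ : Nxt (Function.update w u (some ζ)) u z₂)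
    (hn₃ : Nxt (Function.update w u (some ζ)) z₃ v)
    (hn₄ : Nxt (Function.update w u (some ζ)) v z₄)
    (hv : (Function.update w u (some ζ)) v = some ζ)
    (heq₁ : subword w xo z₁ = subword w yo z₃)
    (heq₂ : subword w z₂ xc = subword w z₄ yc) :
    subword (Function.update w u (some ζ)) xo xc =
      subword (Function.update w u (some ζ)) yo yc := by
  set w' := Function.update w u (some ζ) with hw'
  obtain ⟨_, _, hlt₁, hg₁⟩ := hn₁
  obtain ⟨_, _, hlt₂, hg₂⟩ := hn₂
  obtain ⟨_, _, hlt₃, hg₃⟩ := hn₃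
  obtain ⟨_, _, hlt₄, hg₄⟩ := hn₄
  -- split x-side at z₁ and z₂ - 1
  have sx1 : subword w' xo xc = subword w' xo z₁ ++ subword w' (z₁ + 1) xc :=
    subword_split w' xo z₁ xc (by omega) (by omega)
  have sx2 : subword w' (z₁ + 1) xc
      = subword w' (z₁ + 1) (z₂ - 1) ++ subword w' ((z₂ - 1) + 1) xc :=
    subword_split w' (z₁ + 1) (z₂ - 1) xc (by omega) (by omega)
  have sy1 : subword w' yo yc = subword w' yo z₃ ++ subword w' (z₃ + 1) yc :=
    subword_split w' yo z₃ yc (by omega) (by omega)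
  have sy2 : subword w' (z₃ + 1) yc
      = subword w' (z₃ + 1) (z₄ - 1) ++ subword w' ((z₄ - 1) + 1) yc :=
    subword_split w' (z₃ + 1) (z₄ - 1) yc (by omega) (by omega)
  have hu' : w' u = some ζ := Function.update_self u (some ζ) w
  have hvu : v ≠ u := by omega
  -- middle pieces
  have mx : subword w' (z₁ + 1) (z₂ - 1) = [ζ] := by
    apply subword_bridge w' ζ z₁ z₂ u hlt₁ hlt₂ hu'
    intro z hz1 hz2 hz3
    rcases lt_or_gt_of_ne hz3 with h | h
    · exact hg₁ z hz1 h
    · exact hg₂ z h hz2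
  have my : subword w' (z₃ + 1) (z₄ - 1) = [ζ] := by
    apply subword_bridge w' ζ z₃ z₄ v hlt₃ hlt₄ hv
    intro z hz1 hz2 hz3
    rcases lt_or_gt_of_ne hz3 with h | h
    · exact hg₃ z hz1 h
    · exact hg₄ z h hz2
  -- outer pieces agree with w
  have ox1 : subword w' xo z₁ = subword w xo z₁ :=
    subword_update_not_mem w (some ζ) u xo z₁ (by omega)
  have ox2 : subword w' ((z₂ - 1) + 1) xc = subword w z₂ xc := by
    rw [show (z₂ - 1) + 1 = z₂ by omega]
    exact subword_update_not_mem w (some ζ) u z₂ xc (by omega)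
  have oy1 : subword w' yo z₃ = subword w yo z₃ :=
    subword_update_not_mem w (some ζ) u yo z₃ (by omega)
  have oy2 : subword w' ((z₄ - 1) + 1) yc = subword w z₄ yc := by
    rw [show (z₄ - 1) + 1 = z₄ by omega]
    exact subword_update_not_mem w (some ζ) u z₄ yc (by omega)
  rw [sx1, sx2, sy1, sy2, mx, my, ox1, ox2, oy1, oy2, heq₁, heq₂]
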